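/- Let X be a Markov chain on a finite state space, y a state, and let f be the moving target that sits at a state w ≠ y for the first 2 time steps and at y thereafter (f(1) = f(2) = w, f(t) = y for t ≥ 3, with f(0) ∉ {X_0}). Suppose the walk cannot be at w at times 1 or 2 when started from x (e.g. w is at graph distance > 2 from x). Then E_x[τ_f] − E_x[τ_y] ≥ E_x[(τ_f − τ_y)·1(τ_y ≤ 2)] ≥ P_x(τ_y ≤ 2) · min over z of E_z[τ'], where τ' is the additional time after an early hit of y needed to catch the target; in particular, if P_x(τ_y ≤ 2) > 0 then E_x[τ_f] > E_x[τ_y]. -/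

import Mathlib

open scoped ENNReal

/-- `surv P x A t y`: probability that the chain started at `x` has avoided the moving
target `(A s)` at all times `s ≤ t` and is at `y` at time `t`. -/
noncomputable def surv {S : Type*} [Fintype S] [DecidableEq S]
    (P : Matrix S S ℝ≥0∞) (x : S) (A : ℕ → Finset S) : ℕ → S → ℝ≥0∞
  | 0 => fun y => if y = x ∧ y ∉ A 0 then 1 else 0
  | t + 1 => fun y => if y ∈ A (t + 1) then 0 else ∑ z, surv P x A t z * P z y

/-- Expected hitting time `E_x[τ_A]` of the moving target `(A s)`. -/
noncomputable def ehit {S : Type*} [Fintype S] [DecidableEq S]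
    (P : Matrix S S ℝ≥0∞) (x : S) (A : ℕ → Finset S) : ℝ≥0∞ :=
  ∑' t : ℕ, ∑ y, surv P x A t y

section aux
variable {S : Type*} [Fintype S] [DecidableEq S] (P : Matrix S S ℝ≥0∞)

lemma surv_mem_zero (x : S) (A : ℕ → Finset S) (t : ℕ) (v : S) (hv : v ∈ A t) :
    surv P x A t v = 0 := by
  cases t with
  | zero => simp [surv, hv]
  | succ t => simp [surv, hv]

lemma rowsum_pow (hstoch : ∀ a, ∑ b, P a b = 1) (k : ℕ) (a : S) :
    ∑ b, (P ^ k) a b = 1 := by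
  induction k generalizing a with
  | zero => simp [Matrix.one_apply]
  | succ k ih =>
    rw [pow_succ]
    simp only [Matrix.mul_apply]
    rw [Finset.sum_comm]
    calc ∑ z, ∑ b, (P ^ k) a z * P z b
        = ∑ z, (P ^ k) a z * ∑ b, P z b := by simp [Finset.mul_sum]
      _ = 1 := by simp [hstoch, ih]

lemma surv_le_pow (x : S) (A : ℕ → Finset S) (k : ℕ) (v : S) :
    surv P x A k v ≤ (P ^ k) x v := by
  induction k generalizing v with
  | zero =>
    simp only [surv, pow_zero, Matrix.one_apply]
    split
    · rename_i h; simp [h.1]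
    · exact zero_le
  | succ k ih =>
    simp only [surv]
    split
    · exact zero_le
    · rw [pow_succ, Matrix.mul_apply]
      exact Finset.sum_le_sum fun z _ => mul_le_mul_left (ih z) _

lemma sum_surv_succ_le (hstoch : ∀ a, ∑ b, P a b = 1) (x : S) (A : ℕ → Finset S) (t : ℕ) :
    ∑ v, surv P x A (t + 1) v ≤ ∑ v, surv P x A t v := by
  calc ∑ v, surv P x A (t + 1) v
      ≤ ∑ v, ∑ z, surv P x A t z * P z v := by
        refine Finset.sum_le_sum fun v _ => ?_
        simp only [surv]
        split
        · exact zero_le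
        · exact le_rfl
    _ = ∑ z, surv P x A t z * ∑ v, P z v := by
        rw [Finset.sum_comm]; simp [Finset.mul_sum]
    _ = ∑ v, surv P x A t v := by simp [hstoch]

lemma surv_chapman (x : S) (A : Finset S) (t n : ℕ) (v : S) :
    surv P x (fun _ => A) (t + n) v
      = ∑ z, surv P x (fun _ => A) t z * surv P z (fun _ => A) n v := by
  induction n generalizing v with
  | zero =>
    rw [Nat.add_zero]
    by_cases hv : v ∈ A
    · rw [surv_mem_zero P x _ t v hv]
      refine (Finset.sum_eq_zero fun z _ => ?_).symm
      simp [surv, hv]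
    · rw [Finset.sum_eq_single v]
      · simp [surv, hv]
      · intro z _ hz
        have h0 : surv P z (fun _ => A) 0 v = 0 := by
          simp only [surv]; rw [if_neg]; exact fun h => hz h.1.symm
        rw [h0, mul_zero]
      · simp
  | succ n ih =>
    have h1 : t + (n + 1) = (t + n) + 1 := by omega
    rw [h1]
    simp only [surv]
    by_cases hv : v ∈ A
    · simp [hv]
    · simp only [hv, if_false]
      calc ∑ z, surv P x (fun _ => A) (t + n) z * P z v
          = ∑ z, ∑ u, surv P x (fun _ => A) t u * (surv P u (fun _ => A) n z * P z v) := by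
            simp_rw [ih, Finset.sum_mul, mul_assoc]
        _ = ∑ u, ∑ z, surv P x (fun _ => A) t u * (surv P u (fun _ => A) n z * P z v) :=
            Finset.sum_comm
        _ = ∑ u, surv P x (fun _ => A) t u * ∑ z, surv P u (fun _ => A) n z * P z v := by
            simp_rw [← Finset.mul_sum]

lemma sum_surv_succ_eq (hstoch : ∀ a, ∑ b, P a b = 1) (x : S) (A : ℕ → Finset S) (t : ℕ)
    (h0 : ∀ v ∈ A (t + 1), ∑ z, surv P x A t z * P z v = 0) :
    ∑ v, surv P x A (t + 1) v = ∑ v, surv P x A t v := by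
  have heq : ∀ v, surv P x A (t + 1) v = ∑ z, surv P x A t z * P z v := by
    intro v
    simp only [surv]
    by_cases hv : v ∈ A (t + 1)
    · rw [if_pos hv]; exact (h0 v hv).symm
    · rw [if_neg hv]
  calc ∑ v, surv P x A (t + 1) v
      = ∑ v, ∑ z, surv P x A t z * P z v := Finset.sum_congr rfl fun v _ => heq v
    _ = ∑ z, surv P x A t z * ∑ v, P z v := by
        rw [Finset.sum_comm]; simp [Finset.mul_sum]
    _ = ∑ v, surv P x A t v := by simp [hstoch]

end aux

/-- If the target hides at `w` (unreachable in ≤ 2 steps from `x`) for the first two time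
steps and then sits at `y`, and the walk has positive probability of hitting `y` within
two steps, then the capture time of the moving target strictly exceeds that of the
stationary target at `y` in expectation. -/
theorem stmt16 {S : Type*} [Fintype S] [DecidableEq S]
    (P : Matrix S S ℝ≥0∞)
    (hstoch : ∀ a, ∑ b, P a b = 1)
    (hirr : ∀ a b, ∃ k, 0 < (P ^ k) a b)
    (x y w : S) (hwy : w ≠ y) (f : ℕ → S)
    (hf0 : f 0 ≠ x) (hf1 : f 1 = w) (hf2 : f 2 = w)
    (hf3 : ∀ t, 3 ≤ t → f t = y)
    (hcant1 : P x w = 0) (hcant2 : (P * P) x w = 0)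
    (hhit : ∑ z, surv P x (fun _ => ({y} : Finset S)) 2 z < 1) :
    ehit P x (fun _ => ({y} : Finset S)) < ehit P x fun t => {f t} := by
  set cY : ℕ → Finset S := fun _ => ({y} : Finset S) with hcY
  set cF : ℕ → Finset S := fun t => ({f t} : Finset S) with hcF
  -- pointwise domination
  have hpoint : ∀ t v, surv P x cY t v ≤ surv P x cF t v := by
    intro t
    induction t with
    | zero =>
      intro v
      simp only [surv, hcY, hcF, Finset.mem_singleton]
      by_cases hv : v = x
      · have h2 : (if v = x ∧ ¬v = f 0 then (1 : ℝ≥0∞) else 0) = 1 :=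
          if_pos ⟨hv, fun h => hf0 (h.symm.trans hv)⟩
        rw [h2]
        split <;> simp
      · rw [if_neg (fun h => hv h.1), if_neg (fun h => hv h.1)]
    | succ t ih =>
      intro v
      by_cases hv : v = f (t + 1)
      · have hs0 : surv P x cY (t + 1) v = 0 := by
          by_cases h3 : 3 ≤ t + 1
          · exact surv_mem_zero P x cY (t + 1) v (by simp [hcY, hv, hf3 _ h3])
          · have hle := surv_le_pow P x cY (t + 1) v
            have ht : t = 0 ∨ t = 1 := by omega
            rcases ht with rfl | rfl
            · have hz : (P ^ 1) x v = 0 := by rw [pow_one, hv, hf1]; exact hcant1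
              exact le_antisymm (hz ▸ hle) (zero_le)
            · have hz : (P ^ 2) x v = 0 := by rw [pow_two, hv, hf2]; exact hcant2
              exact le_antisymm (hz ▸ hle) (zero_le)
        rw [hs0]; exact zero_le
      · have hR : surv P x cF (t + 1) v = ∑ z, surv P x cF t z * P z v := by
          simp only [surv]
          rw [if_neg (by simpa [hcF] using hv)]
        rw [hR]
        simp only [surv]
        split
        · exact zero_le
        · exact Finset.sum_le_sum fun z _ => mul_le_mul_left (ih z) _
  -- generic bound on blocked mass flowing into w
  have hb : ∀ n, ∑ z, surv P x cF n z * P z w ≤ (P ^ (n + 1)) x w := by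
    intro n
    rw [pow_succ, Matrix.mul_apply]
    exact Finset.sum_le_sum fun z _ => mul_le_mul_left (surv_le_pow P x cF n z) _
  have hb0 : ∑ z, surv P x cF 0 z * P z w = 0 :=
    le_antisymm (by simpa [pow_one, hcant1] using hb 0) (zero_le)
  have hb1 : ∑ z, surv P x cF 1 z * P z w = 0 :=
    le_antisymm (by simpa [pow_two, hcant2] using hb 1) (zero_le)
  have hswap : ∀ g : S → ℝ≥0∞, ∑ v, ∑ z, g z * P z v = ∑ z, g z := by
    intro g
    rw [Finset.sum_comm]
    simp [← Finset.mul_sum, hstoch]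
  have hU0 : ∑ v, surv P x cF 0 v = 1 := by
    rw [Finset.sum_eq_single x]
    · have hx : x ∉ cF 0 := by simp [hcF]; exact Ne.symm hf0
      simp [surv, hx]
    · intro z _ hz
      simp only [surv]
      rw [if_neg (fun h => hz h.1)]
    · simp
  have hU1 : ∑ v, surv P x cF 1 v = 1 := by
    have h := sum_surv_succ_eq P hstoch x cF 0 (fun v hv => by
      have hvw : v = w := by rw [← hf1]; simpa [hcF] using hv
      rw [hvw]; exact hb0)
    exact h.trans hU0
  have hU2 : ∑ v, surv P x cF 2 v = 1 := by
    have h := sum_surv_succ_eq P hstoch x cF 1 (fun v hv => by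
      have hvw : v = w := by rw [← hf2]; simpa [hcF] using hv
      rw [hvw]; exact hb1)
    exact h.trans hU1
  -- finiteness of the stationary expected hitting time
  set K : S → ℕ := fun z => (hirr z y).choose with hKdef
  have hK : ∀ z, 0 < (P ^ K z) z y := fun z => (hirr z y).choose_spec
  set N : ℕ := Finset.univ.sup K + 1 with hNdef
  haveI : NeZero N := ⟨Nat.succ_ne_zero _⟩
  have hQanti : ∀ z : S, Antitone fun n => ∑ v, surv P z cY n v := fun z =>
    antitone_nat_of_succ_le fun n => sum_surv_succ_le P hstoch z cY n
  have hQk : ∀ z : S, ∑ v, surv P z cY (K z) v < 1 := by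
    intro z
    have h1 : ∑ v, surv P z cY (K z) v ≤ ∑ v ∈ Finset.univ.erase y, (P ^ K z) z v := by
      rw [← Finset.sum_erase Finset.univ
        (surv_mem_zero P z cY (K z) y (Finset.mem_singleton_self y))]
      exact Finset.sum_le_sum fun v _ => surv_le_pow P z cY (K z) v
    have hsum := rowsum_pow P hstoch (K z) z
    rw [← Finset.add_sum_erase Finset.univ _ (Finset.mem_univ y)] at hsum
    have hne : ∑ v ∈ Finset.univ.erase y, (P ^ K z) z v ≠ ⊤ := by
      intro h
      rw [h] at hsum
      simp at hsum
    refine h1.trans_lt ?_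
    calc ∑ v ∈ Finset.univ.erase y, (P ^ K z) z v
        < ∑ v ∈ Finset.univ.erase y, (P ^ K z) z v + (P ^ K z) z y :=
          ENNReal.lt_add_right hne (hK z).ne'
      _ = 1 := by rw [add_comm]; exact hsum
  have hQN : ∀ z : S, ∑ v, surv P z cY N v < 1 := fun z =>
    (hQanti z (le_trans (Finset.le_sup (Finset.mem_univ z)) (Nat.le_succ _))).trans_lt (hQk z)
  set q : ℝ≥0∞ := Finset.univ.sup fun z => ∑ v, surv P z cY N v with hqdef
  have hq1 : q < 1 := by
    rw [hqdef, Finset.sup_lt_iff (by simp : (⊥ : ℝ≥0∞) < 1)]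
    exact fun z _ => hQN z
  have hstepq : ∀ t, ∑ v, surv P x cY (t + N) v ≤ q * ∑ v, surv P x cY t v := by
    intro t
    calc ∑ v, surv P x cY (t + N) v
        = ∑ v, ∑ z, surv P x cY t z * surv P z cY N v := by
          refine Finset.sum_congr rfl fun v _ => ?_
          exact surv_chapman P x ({y} : Finset S) t N v
      _ = ∑ z, surv P x cY t z * ∑ v, surv P z cY N v := by
          rw [Finset.sum_comm]; simp_rw [← Finset.mul_sum]
      _ ≤ ∑ z, surv P x cY t z * q :=
          Finset.sum_le_sum fun z _ =>
            mul_le_mul_right (Finset.le_sup (f := fun z => ∑ v, surv P z cY N v)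
              (Finset.mem_univ z)) _
      _ = q * ∑ v, surv P x cY t v := by rw [← Finset.sum_mul, mul_comm]
  have hS0 : ∑ v, surv P x cY 0 v ≤ 1 := by
    have := surv_le_pow P x cY 0
    calc ∑ v, surv P x cY 0 v ≤ ∑ v, (P ^ 0) x v :=
          Finset.sum_le_sum fun v _ => surv_le_pow P x cY 0 v
      _ = 1 := rowsum_pow P hstoch 0 x
  have hgeo : ∀ m, ∑ v, surv P x cY (N * m) v ≤ q ^ m := by
    intro m
    induction m with
    | zero => simpa using hS0
    | succ m ih =>
      have h1 : N * (m + 1) = N * m + N := by ring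
      rw [h1]
      calc ∑ v, surv P x cY (N * m + N) v ≤ q * ∑ v, surv P x cY (N * m) v := hstepq _
        _ ≤ q * q ^ m := mul_le_mul_right ih _
        _ = q ^ (m + 1) := by rw [pow_succ, mul_comm]
  have hanti : Antitone fun t => ∑ v, surv P x cY t v :=
    antitone_nat_of_succ_le fun n => sum_surv_succ_le P hstoch x cY n
  have hSle : ∀ t, ∑ v, surv P x cY t v ≤ q ^ (t / N) := by
    intro t
    have h1 : N * (t / N) ≤ t := by
      rw [mul_comm]; exact Nat.div_mul_le_self t N
    exact (hanti h1).trans (hgeo _)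
  have hfin : ehit P x cY ≠ ⊤ := by
    have h1 : ehit P x cY ≤ ∑' t : ℕ, q ^ (t / N) := ENNReal.tsum_le_tsum hSle
    have h2 : ∑' t : ℕ, q ^ (t / N) = ∑' p : ℕ × Fin N, q ^ p.1 := by
      rw [← Equiv.tsum_eq (Nat.divModEquiv N) fun p : ℕ × Fin N => q ^ p.1]
      rfl
    have h3 : ∑' p : ℕ × Fin N, q ^ p.1 = (N : ℝ≥0∞) * (1 - q)⁻¹ := by
      rw [ENNReal.tsum_prod (f := fun (a : ℕ) (_ : Fin N) => q ^ a)]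
      simp only [tsum_fintype, Finset.sum_const, Finset.card_univ, Fintype.card_fin,
        nsmul_eq_mul]
      rw [ENNReal.tsum_mul_left, ENNReal.tsum_geometric]
    refine ne_top_of_le_ne_top ?_ (h1.trans_eq (h2.trans h3))
    exact ENNReal.mul_ne_top (ENNReal.natCast_ne_top N)
      (ENNReal.inv_ne_top.mpr (tsub_pos_of_lt hq1).ne')
  -- conclude
  have hlt2 : ∑ v, surv P x cY 2 v < ∑ v, surv P x cF 2 v := by
    rw [hU2]; exact hhit
  exact ENNReal.tsum_lt_tsum hfin (fun t => Finset.sum_le_sum fun v _ => hpoint t v) hlt2
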